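/- (Sims' Lemma) Let L1 and L2 be nontrivial compatible finite groups. If (G, p1, p2) is a witness system for the compatibility of (L1, L2) such that |G| is minimal among all witness systems for (L1, L2), then (p1(ker(p2)), p2(ker(p1))) is a Sims pair for (L1, L2); that is, p1(ker(p2)) ⊴ L1 and p2(ker(p1)) ⊴ L2 are compatible, and L1/p1(ker(p2)) and L2/p2(ker(p1)) are isomorphic and nontrivial. -/

import Mathlib

/-- `(G, p1, p2)` is a witness system for the compatibility of `(L1, L2)`:
`p1 : G → L1` and `p2 : G → L2` are surjective with isomorphic kernels. -/
structure IsWitnessSystem (L1 : Type) [Group L1] (L2 : Type) [Group L2]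
    (G : Type) [Group G] (p1 : G →* L1) (p2 : G →* L2) : Prop where
  surjective_fst : Function.Surjective p1
  surjective_snd : Function.Surjective p2
  ker_iso : Nonempty (↥p1.ker ≃* ↥p2.ker)

/-- A witness system whose group `G` has minimal order among all witness systems
for the compatibility of `(L1, L2)`. -/
def IsMinimalWitnessSystem (L1 : Type) [Group L1] (L2 : Type) [Group L2]
    (G : Type) [Group G] [Finite G] (p1 : G →* L1) (p2 : G →* L2) : Prop :=
  IsWitnessSystem L1 L2 G p1 p2 ∧
    ∀ (G' : Type) (_ : Group G') (_ : Finite G') (q1 : G' →* L1) (q2 : G' →* L2),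
      IsWitnessSystem L1 L2 G' q1 q2 → Nat.card G ≤ Nat.card G'

/-- Two finite groups `L1` and `L2` are compatible if some finite group `G` has
isomorphic normal subgroups `N1 ≅ N2` with `G ⧸ N1 ≅ L1` and `G ⧸ N2 ≅ L2`. -/
def Compatible (L1 : Type) [Group L1] (L2 : Type) [Group L2] : Prop :=
  ∃ (G : Type) (_ : Group G) (_ : Finite G) (N1 N2 : Subgroup G)
    (h1 : N1.Normal) (h2 : N2.Normal),
    Nonempty (↥N1 ≃* ↥N2) ∧
      (letI := h1; letI := h2;
        Nonempty ((G ⧸ N1) ≃* L1) ∧ Nonempty ((G ⧸ N2) ≃* L2))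

/-- `(M1, M2)` is a Sims pair for `(L1, L2)`: `M1 ⊴ L1` and `M2 ⊴ L2` are compatible
and `L1 ⧸ M1 ≅ L2 ⧸ M2` is nontrivial. -/
def IsSimsPair (L1 : Type) [Group L1] (L2 : Type) [Group L2]
    (M1 : Subgroup L1) (M2 : Subgroup L2) : Prop :=
  ∃ (h1 : M1.Normal) (h2 : M2.Normal),
    Compatible ↥M1 ↥M2 ∧
      (letI := h1; letI := h2;
        Nonempty ((L1 ⧸ M1) ≃* (L2 ⧸ M2)) ∧ Nontrivial (L1 ⧸ M1))

/-- Sims' Lemma: if `(G, p1, p2)` is a witness system of minimal order for the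
compatibility of the nontrivial compatible groups `L1` and `L2`, then
`(p1(ker p2), p2(ker p1))` is a Sims pair for `(L1, L2)`. -/
theorem sims_lemma
    (L1 : Type) [Group L1] [Finite L1] [Nontrivial L1]
    (L2 : Type) [Group L2] [Finite L2] [Nontrivial L2]
    (hcomp : Compatible L1 L2)
    (G : Type) [Group G] [Finite G] (p1 : G →* L1) (p2 : G →* L2)
    (hmin : IsMinimalWitnessSystem L1 L2 G p1 p2) :
    IsSimsPair L1 L2 (p2.ker.map p1) (p1.ker.map p2) := by
  obtain ⟨⟨hs1, hs2, ⟨φ⟩⟩, hminle⟩ := hmin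
  set N1 := p1.ker with hN1def
  set N2 := p2.ker with hN2def
  have h1 : (N2.map p1).Normal := Subgroup.Normal.map inferInstance p1 hs1
  have h2 : (N1.map p2).Normal := Subgroup.Normal.map inferInstance p2 hs2
  haveI := h1; haveI := h2
  -- the isomorphism between N1.subgroupOf N2 and N2.subgroupOf N1
  let einf : ↥(N1.subgroupOf N2) ≃* ↥(N2.subgroupOf N1) :=
    ((MulEquiv.subgroupCongr (Subgroup.inf_subgroupOf_right N1 N2).symm).trans
      (Subgroup.subgroupOfEquivOfLe inf_le_right)).trans
      ((MulEquiv.subgroupCongr (inf_comm N1 N2)).trans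
        (((MulEquiv.subgroupCongr (Subgroup.inf_subgroupOf_right N2 N1).symm).trans
          (Subgroup.subgroupOfEquivOfLe inf_le_right)).symm))
  -- kernels of restricted maps
  let q1 : ↥N2 →* L1 := p1.comp N2.subtype
  have hkq1 : q1.ker = N1.subgroupOf N2 := by
    ext x; simp [q1, MonoidHom.mem_ker, Subgroup.mem_subgroupOf, hN1def]
  have hrq1 : q1.range = N2.map p1 := by
    rw [MonoidHom.range_comp, Subgroup.range_subtype]
  let q2' : ↥N1 →* L2 := p2.comp N1.subtype
  have hkq2' : q2'.ker = N2.subgroupOf N1 := by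
    ext x; simp [q2', MonoidHom.mem_ker, Subgroup.mem_subgroupOf, hN2def]
  have hrq2' : q2'.range = N1.map p2 := by
    rw [MonoidHom.range_comp, Subgroup.range_subtype]
  refine ⟨h1, h2, ?_, ⟨?_⟩, ?_⟩
  · -- Compatibility of (p1(N2), p2(N1))
    haveI hK2n : ((N2.subgroupOf N1).map φ.toMonoidHom).Normal :=
      Subgroup.Normal.map inferInstance φ.toMonoidHom φ.surjective
    refine ⟨↥N2, inferInstance, inferInstance, N1.subgroupOf N2,
      (N2.subgroupOf N1).map φ.toMonoidHom, inferInstance, hK2n,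
      ⟨einf.trans (φ.subgroupMap (N2.subgroupOf N1))⟩, ⟨?_⟩, ⟨?_⟩⟩
    · exact (QuotientGroup.quotientMulEquivOfEq hkq1.symm).trans
        ((QuotientGroup.quotientKerEquivRange q1).trans (MulEquiv.subgroupCongr hrq1))
    · exact (QuotientGroup.congr (N2.subgroupOf N1)
        ((N2.subgroupOf N1).map φ.toMonoidHom) φ rfl).symm.trans
        ((QuotientGroup.quotientMulEquivOfEq hkq2'.symm).trans
          ((QuotientGroup.quotientKerEquivRange q2').trans (MulEquiv.subgroupCongr hrq2')))
  · -- L1 ⧸ p1(N2) ≃* L2 ⧸ p2(N1)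
    let f1 := (QuotientGroup.mk' (N2.map p1)).comp p1
    have hf1 : Function.Surjective f1 :=
      (QuotientGroup.mk'_surjective _).comp hs1
    have hkf1 : f1.ker = N2 ⊔ N1 := by
      rw [← MonoidHom.comap_ker, QuotientGroup.ker_mk', Subgroup.comap_map_eq]
    let f2 := (QuotientGroup.mk' (N1.map p2)).comp p2
    have hf2 : Function.Surjective f2 :=
      (QuotientGroup.mk'_surjective _).comp hs2
    have hkf2 : f2.ker = N1 ⊔ N2 := by
      rw [← MonoidHom.comap_ker, QuotientGroup.ker_mk', Subgroup.comap_map_eq]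
    exact ((QuotientGroup.quotientKerEquivOfSurjective f1 hf1).symm.trans
      (QuotientGroup.quotientMulEquivOfEq (hkf1.trans (hkf2.trans (sup_comm N1 N2)).symm))).trans
      (QuotientGroup.quotientKerEquivOfSurjective f2 hf2)
  · -- Nontriviality, using minimality
    by_contra hnt
    rw [not_nontrivial_iff_subsingleton] at hnt
    have hM1top : N2.map p1 = ⊤ := by
      rw [Subgroup.eq_top_iff']
      intro x
      exact (QuotientGroup.eq_one_iff x).mp (Subsingleton.elim _ _)
    have hsup : N2 ⊔ N1 = ⊤ := by
      rw [← Subgroup.comap_map_eq, hM1top, Subgroup.comap_top]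
    have hM2top : N1.map p2 = ⊤ := by
      have hc : Subgroup.comap p2 (N1.map p2) = ⊤ := by
        rw [Subgroup.comap_map_eq, sup_comm, hsup]
      calc N1.map p2 = Subgroup.map p2 (Subgroup.comap p2 (N1.map p2)) :=
            (Subgroup.map_comap_eq_self_of_surjective hs2 _).symm
        _ = ⊤ := by rw [hc, Subgroup.map_top_of_surjective p2 hs2]
    -- N2 is a proper subgroup
    have hN2ne : N2 ≠ ⊤ := by
      intro h
      obtain ⟨y, hy⟩ := exists_ne (1 : L2)
      obtain ⟨g, rfl⟩ := hs2 y
      exact hy (show g ∈ N2 from h ▸ Subgroup.mem_top g)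
    have hcard : Nat.card ↥N2 < Nat.card G :=
      lt_of_le_of_ne N2.card_le_card_group (fun h => hN2ne (N2.eq_top_of_card_eq h))
    -- build a smaller witness system on N2
    have hq1surj : Function.Surjective q1 := by
      intro x
      have hx : x ∈ N2.map p1 := hM1top ▸ Subgroup.mem_top x
      obtain ⟨g, hg, rfl⟩ := hx
      exact ⟨⟨g, hg⟩, rfl⟩
    let q2 : ↥N2 →* L2 := q2'.comp (φ.symm : ↥N2 →* ↥N1)
    have hq2surj : Function.Surjective q2 := by
      intro x
      have hx : x ∈ N1.map p2 := hM2top ▸ Subgroup.mem_top x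
      obtain ⟨g, hg, rfl⟩ := hx
      exact ⟨φ ⟨g, hg⟩, by simp [q2, q2']⟩
    have hkq2 : q2.ker = (N2.subgroupOf N1).map φ.toMonoidHom := by
      ext x
      rw [Subgroup.mem_map_equiv]
      simp [q2, q2', MonoidHom.mem_ker, Subgroup.mem_subgroupOf, hN2def]
      constructor
      · rintro ⟨a, ha, hN, rfl⟩
        simpa using ha
      · intro h
        exact ⟨_, h, (φ.symm x).2, by simp⟩
    have eker : ↥q1.ker ≃* ↥q2.ker :=
      (MulEquiv.subgroupCongr hkq1).trans
        ((einf.trans (φ.subgroupMap (N2.subgroupOf N1))).trans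
          (MulEquiv.subgroupCongr hkq2.symm))
    have hws : IsWitnessSystem L1 L2 ↥N2 q1 q2 := ⟨hq1surj, hq2surj, ⟨eker⟩⟩
    exact absurd (hminle ↥N2 inferInstance inferInstance q1 q2 hws) (not_le.mpr hcard)
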